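/- If G is a black-and-white graph in which every connected component contains at least one black vertex, then there exists a successful pressing path, i.e., a finite sequence of presses transforming G into the all-white edgeless graph. -/

import Mathlib

structure BW (V : Type) where
  adj : V → V → Bool
  black : V → Bool
  symm : ∀ u w, adj u w = adj w u
  irrefl : ∀ v, adj v v = false

variable {V : Type} [DecidableEq V]

/-- Pressing a vertex `v`: neighbors toggle color, pairs of neighbors toggle
adjacency, and `v` becomes white and isolated. -/
def press (G : BW V) (v : V) : BW V where
  adj u w :=
    if u = v ∨ w = v ∨ u = w then false
    else xor (G.adj u w) (G.adj u v && G.adj w v)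
  black u := if u = v then false else xor (G.black u) (G.adj u v)
  symm := by
    intro u w
    by_cases h1 : u = v <;> by_cases h2 : w = v <;> by_cases h3 : u = w <;>
      simp_all [G.symm u w, Bool.xor_comm, Bool.and_comm] <;> tauto
  irrefl := by intro u; simp

/-- The graph obtained after pressing the vertices of a list in order. -/
def pressPath (G : BW V) : List V → BW V
  | [] => G
  | v :: P => pressPath (press G v) P

/-- A pressing path is valid if every vertex is black when it is pressed. -/
def ValidPath (G : BW V) : List V → Prop
  | [] => True
  | v :: P => G.black v = true ∧ ValidPath (press G v) P

/-- The all-white, edgeless graph. -/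
def AllWhiteEmpty (G : BW V) : Prop :=
  (∀ v, G.black v = false) ∧ ∀ u w, G.adj u w = false

/-- A successful pressing path: valid and leading to the all-white empty graph. -/
def Successful (G : BW V) (P : List V) : Prop :=
  ValidPath G P ∧ AllWhiteEmpty (pressPath G P)

/-- The underlying simple graph of a black-and-white graph. -/
def BW.toSimple (G : BW V) : SimpleGraph V where
  Adj u w := G.adj u w = true
  symm := ⟨fun u w h => (G.symm w u).trans h⟩
  loopless := ⟨fun v h => by simp [G.irrefl] at h⟩

/-- `l` enumerates the vertices as a path: `G` is linear with vertex order `l`. -/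
def IsPathList (G : BW V) (l : List V) : Prop :=
  l.Nodup ∧ (∀ v, v ∈ l) ∧
    ∀ u w, G.adj u w = true ↔ ∃ i,
      (l[i]? = some u ∧ l[i+1]? = some w) ∨ (l[i]? = some w ∧ l[i+1]? = some u)

/-- A linear (path) black-and-white graph. -/
def IsLinear (G : BW V) : Prop := ∃ l, IsPathList G l

/-- Adjacency step in the metagraph of successful pressing paths:
their longest common subsequence misses at most 2 presses. -/
def Step (G : BW V) (P Q : List V) : Prop :=
  Successful G P ∧ Successful G Q ∧
    ∃ R : List V, R.Sublist P ∧ R.Sublist Q ∧ P.length ≤ R.length + 2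

/-- Transposition of two consecutive presses which are non-adjacent at that moment. -/
def SwapStep (G : BW V) (P Q : List V) : Prop :=
  ∃ A u w B, P = A ++ u :: w :: B ∧ Q = A ++ w :: u :: B ∧
    (pressPath G A).adj u w = false

/-- The induced black-and-white graph on a subset of the vertices. -/
def BW.restrict (G : BW V) (p : V → Prop) [DecidablePred p] : BW {u // p u} where
  adj u w := G.adj u.1 w.1
  black u := G.black u.1
  symm := fun u w => G.symm u.1 w.1
  irrefl := fun u => G.irrefl u.1

/-- The all-black path graph on `n` vertices. -/
def pathAllBlack (n : ℕ) : BW (Fin n) where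
  adj i j := decide (i.1 + 1 = j.1 ∨ j.1 + 1 = i.1)
  black _ := true
  symm := by intro u w; simp [or_comm]
  irrefl := by intro v; simp

section Aux

variable {V : Type} [DecidableEq V]

/-- Reachability in a black-and-white graph. -/
def Reach (G : BW V) (a b : V) : Prop :=
  Relation.ReflTransGen (fun x y => G.adj x y = true) a b

/-- The invariant: every vertex incident to an edge can reach a black vertex. -/
def Inv0 (G : BW V) : Prop :=
  ∀ u w : V, G.adj u w = true → ∃ x, Reach G u x ∧ G.black x = true

lemma press_adj (G : BW V) (v a b : V) :
    (press G v).adj a b =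
      if a = v ∨ b = v ∨ a = b then false
      else xor (G.adj a b) (G.adj a v && G.adj b v) := rfl

lemma press_black (G : BW V) (v a : V) :
    (press G v).black a = if a = v then false else xor (G.black a) (G.adj a v) := rfl

lemma adj_ne {G : BW V} {a b : V} (h : G.adj a b = true) : a ≠ b := by
  intro he; subst he; rw [G.irrefl] at h; exact Bool.false_ne_true h

lemma reach_to_isolated {H : BW V} {u t : V} (h : Reach H u t)
    (hiso : ∀ y, H.adj y t = false) : u = t := by
  rcases Relation.ReflTransGen.cases_tail h with h' | ⟨c, _, hct⟩
  · exact h'.symm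
  · rw [hiso c] at hct; exact absurd hct Bool.false_ne_true

section FT
variable [Fintype V]

/-- neighbors -/
def nbrS (G : BW V) (v : V) : Finset V := Finset.univ.filter fun x => G.adj v x = true

/-- black neighbors -/
def bnbrS (G : BW V) (v : V) : Finset V :=
  Finset.univ.filter fun x => G.adj v x = true ∧ G.black x = true

/-- lexicographic key -/
def keyN (G : BW V) (v : V) : ℕ :=
  (bnbrS G v).card * (Fintype.card V + 1) + (Fintype.card V - (nbrS G v).card)

lemma nbrS_card_le (G : BW V) (v : V) : (nbrS G v).card ≤ Fintype.card V :=
  Finset.card_filter_le _ _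

lemma key_consequence {C a b ra rb : ℕ} (hra : ra < C) (hrb : rb < C)
    (h : a * C + ra ≤ b * C + rb) : a < b ∨ (a = b ∧ ra ≤ rb) := by
  rcases lt_trichotomy a b with h' | h' | h'
  · exact Or.inl h'
  · subst h'; exact Or.inr ⟨rfl, by omega⟩
  · exfalso
    have h2 : b * C + C ≤ a * C := by
      have := Nat.mul_le_mul_right C (Nat.succ_le_of_lt h')
      rwa [Nat.succ_mul] at this
    have hX : a * C = a * C := rfl
    generalize a * C = X at h h2
    generalize b * C = Y at h h2
    omega

/-- The key lemma: pressing a black vertex of minimal key preserves the invariant. -/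
lemma inv_press (G : BW V) (v : V) (hv : G.black v = true)
    (hmin : ∀ x, G.black x = true → keyN G v ≤ keyN G x)
    (hinv : Inv0 G) : Inv0 (press G v) := by
  intro u w huw
  by_contra hC
  push_neg at hC
  set H := press G v with hH
  have hWx : ∀ x, Reach H u x → H.black x = false := by
    intro x hx
    have := hC x hx
    exact Bool.not_eq_true _ ▸ (by simpa using this)
  -- v is isolated in H
  have hviso : ∀ y, H.adj y v = false := by
    intro y; rw [press_adj]; simp
  -- reachable vertices are ≠ v
  have hne : ∀ x, Reach H u x → x ≠ v := by
    intro x hx hxv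
    subst hxv
    have huv : u = x := reach_to_isolated hx hviso
    subst huv
    rw [press_adj] at huw; simp at huw
  -- black formula for reachable vertices
  have hblackH : ∀ x, Reach H u x → xor (G.black x) (G.adj x v) = false := by
    intro x hx
    have h1 := hWx x hx
    rw [press_black, if_neg (hne x hx)] at h1
    exact h1
  -- Step 1: there is s reachable from u with G.adj s v = true
  have hS : ∃ s, Reach H u s ∧ G.adj s v = true := by
    by_contra hS
    push_neg at hS
    have hSv : ∀ x, Reach H u x → G.adj x v = false := by
      intro x hx
      have := hS x hx
      cases hxv : G.adj x v with
      | false => rfl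
      | true => exact absurd hxv this
    -- G-reachability implies H-reachability
    have hGH : ∀ x, Reach G u x → Reach H u x := by
      intro x hx
      induction hx with
      | refl => exact Relation.ReflTransGen.refl
      | tail hab hbc ih =>
        rename_i b c
        refine Relation.ReflTransGen.tail ih ?_
        have hbv : G.adj b v = false := hSv b ih
        have hbnev : b ≠ v := hne b ih
        have hcnev : c ≠ v := by
          intro hcv; subst hcv; rw [hbv] at hbc; exact Bool.false_ne_true hbc
        have hbnec : b ≠ c := adj_ne hbc
        rw [press_adj, if_neg (by tauto), hbv, hbc]
        rfl
    -- u-w is a G edge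
    have huvG : G.adj u v = false := hSv u Relation.ReflTransGen.refl
    have hGuw : G.adj u w = true := by
      rw [press_adj] at huw
      by_cases hcond : u = v ∨ w = v ∨ u = w
      · rw [if_pos hcond] at huw; exact absurd huw Bool.false_ne_true
      · rw [if_neg hcond, huvG] at huw
        simpa using huw
    obtain ⟨x, hrx, hbx⟩ := hinv u w hGuw
    have hrHx := hGH x hrx
    have := hblackH x hrHx
    rw [hbx, hSv x hrHx] at this
    exact Bool.false_ne_true this.symm
  obtain ⟨s, hrs, hsv⟩ := hS
  have hsnev : s ≠ v := hne s hrs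
  -- s was black
  have hsb : G.black s = true := by
    have := hblackH s hrs
    rw [hsv] at this
    cases hb : G.black s with
    | false => rw [hb] at this; exact absurd this (by simp)
    | true => rfl
  have hvs : G.adj v s = true := (G.symm v s).trans hsv
  -- P1 : every black neighbor of s other than v is adjacent to v
  have P1 : ∀ x, G.adj s x = true → G.black x = true → x ≠ v → G.adj x v = true := by
    intro x hsx hbx hxnev
    by_contra hxv
    have hxvf : G.adj x v = false := by
      cases h' : G.adj x v with
      | false => rfl
      | true => exact absurd h' hxv
    have hHsx : H.adj s x = true := by
      rw [press_adj, if_neg (by push_neg; exact ⟨hsnev, hxnev, adj_ne hsx⟩), hsx, hxvf]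
      simp
    have hrx : Reach H u x := hrs.tail hHsx
    have := hblackH x hrx
    rw [hbx, hxvf] at this
    exact Bool.false_ne_true this.symm
  -- P2 : every white neighbor of v is adjacent to s
  have P2 : ∀ x, G.adj v x = true → G.black x = false → G.adj s x = true := by
    intro x hvx hwx
    by_contra hsx
    have hsxf : G.adj s x = false := by
      cases h' : G.adj s x with
      | false => rfl
      | true => exact absurd h' hsx
    have hxnev : x ≠ v := fun he => adj_ne hvx he.symm
    have hxnes : x ≠ s := fun he => by rw [he, hsb] at hwx; exact Bool.noConfusion hwx
    have hxv : G.adj x v = true := (G.symm x v).trans hvx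
    have hHsx : H.adj s x = true := by
      rw [press_adj, if_neg (by push_neg; exact ⟨hsnev, hxnev, fun he => hxnes he.symm⟩),
        hsxf, hsv, hxv]
      rfl
    have hrx : Reach H u x := hrs.tail hHsx
    have := hblackH x hrx
    rw [hwx, hxv] at this
    exact Bool.false_ne_true this.symm
  -- black-neighbor finset inclusion
  have hsub1 : bnbrS G s ⊆ insert v ((bnbrS G v).erase s) := by
    intro x hx
    rw [bnbrS, Finset.mem_filter] at hx
    obtain ⟨-, hsx, hbx⟩ := hx
    by_cases hxv : x = v
    · subst hxv; exact Finset.mem_insert_self _ _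
    · refine Finset.mem_insert_of_mem (Finset.mem_erase.2 ⟨fun he => adj_ne hsx he.symm, ?_⟩)
      rw [bnbrS, Finset.mem_filter]
      exact ⟨Finset.mem_univ _, (G.symm v x).trans (P1 x hsx hbx hxv), hbx⟩
  have hsmem : s ∈ bnbrS G v := by
    rw [bnbrS, Finset.mem_filter]; exact ⟨Finset.mem_univ _, hvs, hsb⟩
  have hbn_pos : 0 < (bnbrS G v).card := Finset.card_pos.2 ⟨s, hsmem⟩
  have herase1 : ((bnbrS G v).erase s).card = (bnbrS G v).card - 1 :=
    Finset.card_erase_of_mem hsmem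
  have hbn_le : (bnbrS G s).card ≤ (bnbrS G v).card := by
    calc (bnbrS G s).card ≤ (insert v ((bnbrS G v).erase s)).card :=
          Finset.card_le_card hsub1
      _ ≤ ((bnbrS G v).erase s).card + 1 := Finset.card_insert_le _ _
      _ ≤ (bnbrS G v).card := by omega
  -- use minimality
  have hkey := hmin s hsb
  have hra : Fintype.card V - (nbrS G v).card < Fintype.card V + 1 := by
    have := nbrS_card_le G v; omega
  have hrb : Fintype.card V - (nbrS G s).card < Fintype.card V + 1 := by
    have := nbrS_card_le G s; omega
  have hcons := key_consequence hra hrb hkey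
  have hbn_eq : (bnbrS G s).card = (bnbrS G v).card := by
    rcases hcons with h' | ⟨h', _⟩
    · omega
    · omega
  have hdg_le : (nbrS G s).card ≤ (nbrS G v).card := by
    rcases hcons with h' | ⟨-, h'⟩
    · omega
    · have h1 := nbrS_card_le G v
      have h2 := nbrS_card_le G s
      omega
  -- equality of black-neighbor sets
  have heq1 : bnbrS G s = insert v ((bnbrS G v).erase s) := by
    refine Finset.eq_of_subset_of_card_le hsub1 ?_
    calc (insert v ((bnbrS G v).erase s)).card
        ≤ ((bnbrS G v).erase s).card + 1 := Finset.card_insert_le _ _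
      _ ≤ (bnbrS G v).card := by omega
      _ = (bnbrS G s).card := hbn_eq.symm
  -- C_all : s is adjacent to every neighbor of v other than s
  have C_all : ∀ x, G.adj v x = true → x ≠ s → G.adj s x = true := by
    intro x hvx hxnes
    cases hbx : G.black x with
    | false => exact P2 x hvx hbx
    | true =>
      have hxmem : x ∈ bnbrS G s := by
        rw [heq1]
        refine Finset.mem_insert_of_mem (Finset.mem_erase.2 ⟨hxnes, ?_⟩)
        rw [bnbrS, Finset.mem_filter]
        exact ⟨Finset.mem_univ _, hvx, hbx⟩
      rw [bnbrS, Finset.mem_filter] at hxmem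
      exact hxmem.2.1
  -- neighbor finset inclusion the other way
  have hvnotin : v ∉ (nbrS G v).erase s := by
    intro hmem
    have := (Finset.mem_erase.1 hmem).2
    rw [nbrS, Finset.mem_filter, G.irrefl] at this
    exact Bool.false_ne_true this.2
  have hsmem2 : s ∈ nbrS G v := by rw [nbrS, Finset.mem_filter]; exact ⟨Finset.mem_univ _, hvs⟩
  have hsub2 : insert v ((nbrS G v).erase s) ⊆ nbrS G s := by
    intro x hx
    rcases Finset.mem_insert.1 hx with h' | h'
    · subst h'; rw [nbrS, Finset.mem_filter]; exact ⟨Finset.mem_univ _, hsv⟩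
    · obtain ⟨hxnes, hxmem⟩ := Finset.mem_erase.1 h'
      rw [nbrS, Finset.mem_filter] at hxmem
      rw [nbrS, Finset.mem_filter]
      exact ⟨Finset.mem_univ _, C_all x hxmem.2 hxnes⟩
  have hcard2 : (insert v ((nbrS G v).erase s)).card = (nbrS G v).card := by
    rw [Finset.card_insert_of_notMem hvnotin, Finset.card_erase_of_mem hsmem2]
    have : 0 < (nbrS G v).card := Finset.card_pos.2 ⟨s, hsmem2⟩
    omega
  have heq2 : insert v ((nbrS G v).erase s) = nbrS G s := by
    refine Finset.eq_of_subset_of_card_le hsub2 ?_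
    rw [hcard2]; exact hdg_le
  -- P3 : s is isolated in H
  have P3 : ∀ y, H.adj s y = false := by
    intro y
    by_cases h1 : s = v ∨ y = v ∨ s = y
    · rw [press_adj, if_pos h1]
    · push_neg at h1
      obtain ⟨_, hynev, hsney⟩ := h1
      rw [press_adj, if_neg (by push_neg; exact ⟨hsnev, hynev, hsney⟩)]
      cases hyv : G.adj y v with
      | true =>
        have hvy : G.adj v y = true := (G.symm v y).trans hyv
        have hsy : G.adj s y = true := C_all y hvy (fun he => hsney he.symm)
        rw [hsy, hsv]
        rfl
      | false =>
        have hynotin : y ∉ nbrS G s := by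
          rw [← heq2]
          intro hmem
          rcases Finset.mem_insert.1 hmem with h' | h'
          · exact hynev h'
          · have := (Finset.mem_erase.1 h').2
            rw [nbrS, Finset.mem_filter] at this
            have hvy := this.2
            rw [G.symm v y, hyv] at hvy
            exact Bool.false_ne_true hvy
        have hsy : G.adj s y = false := by
          cases h' : G.adj s y with
          | false => rfl
          | true =>
            exact absurd (by rw [nbrS, Finset.mem_filter]; exact ⟨Finset.mem_univ _, h'⟩) hynotin
        rw [hsy]
        simp
  -- P4 : contradiction
  have hus : u = s := reach_to_isolated hrs (fun y => (H.symm y s).trans (P3 y))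
  subst hus
  rw [P3 w] at huw
  exact Bool.false_ne_true huw

/-- Active vertices: black, or incident to an edge. -/
def activeS (G : BW V) : Finset V :=
  Finset.univ.filter fun x => G.black x = true ∨ ∃ w, G.adj x w = true

lemma active_lt (G : BW V) (v : V) (hv : G.black v = true) :
    (activeS (press G v)).card < (activeS G).card := by
  refine Finset.card_lt_card ⟨?_, ?_⟩
  · intro x hx
    rw [activeS, Finset.mem_filter] at hx ⊢
    refine ⟨Finset.mem_univ _, ?_⟩
    rcases hx.2 with hb | ⟨w, hw⟩
    · rw [press_black] at hb
      by_cases hxv : x = v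
      · rw [if_pos hxv] at hb; exact absurd hb Bool.false_ne_true
      · rw [if_neg hxv] at hb
        cases h1 : G.black x with
        | true => exact Or.inl rfl
        | false =>
          rw [h1] at hb
          refine Or.inr ⟨v, ?_⟩
          simpa using hb
    · rw [press_adj] at hw
      by_cases hcond : x = v ∨ w = v ∨ x = w
      · rw [if_pos hcond] at hw; exact absurd hw Bool.false_ne_true
      · rw [if_neg hcond] at hw
        cases h1 : G.adj x w with
        | true => exact Or.inr ⟨w, h1⟩
        | false =>
          rw [h1] at hw
          refine Or.inr ⟨v, ?_⟩
          have : (G.adj x v && G.adj w v) = true := by simpa using hw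
          exact (Bool.and_eq_true _ _ ▸ this).1
  · intro hsub
    have hv1 : v ∈ activeS G := by
      rw [activeS, Finset.mem_filter]; exact ⟨Finset.mem_univ _, Or.inl hv⟩
    have hv2 := hsub hv1
    rw [activeS, Finset.mem_filter] at hv2
    rcases hv2.2 with hb | ⟨w, hw⟩
    · rw [press_black, if_pos rfl] at hb; exact Bool.false_ne_true hb
    · rw [press_adj, if_pos (Or.inl rfl)] at hw; exact Bool.false_ne_true hw

lemma allwhite_of_noblack (G : BW V) (hinv : Inv0 G)
    (hb : ∀ v : V, G.black v = false) : AllWhiteEmpty G := by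
  refine ⟨hb, ?_⟩
  intro u w
  cases h' : G.adj u w with
  | false => rfl
  | true =>
    obtain ⟨x, -, hx⟩ := hinv u w h'
    rw [hb x] at hx
    exact absurd hx Bool.false_ne_true

lemma main_aux : ∀ (n : ℕ) (G : BW V), (activeS G).card ≤ n → Inv0 G →
    ∃ P : List V, Successful G P := by
  intro n
  induction n with
  | zero =>
    intro G hcard hinv
    have hb : ∀ v : V, G.black v = false := by
      intro v
      cases h' : G.black v with
      | false => rfl
      | true =>
        exfalso
        have : v ∈ activeS G := by
          rw [activeS, Finset.mem_filter]; exact ⟨Finset.mem_univ _, Or.inl h'⟩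
        have := Finset.card_pos.2 ⟨v, this⟩
        omega
    exact ⟨[], trivial, allwhite_of_noblack G hinv hb⟩
  | succ n ih =>
    intro G hcard hinv
    by_cases hb : ∃ v : V, G.black v = true
    · obtain ⟨v0, hv0⟩ := hb
      obtain ⟨v, hvmem, hvmin⟩ :=
        Finset.exists_min_image (Finset.univ.filter fun x => G.black x = true) (keyN G)
          ⟨v0, by rw [Finset.mem_filter]; exact ⟨Finset.mem_univ _, hv0⟩⟩
      have hv : G.black v = true := (Finset.mem_filter.1 hvmem).2
      have hmin : ∀ x, G.black x = true → keyN G v ≤ keyN G x := by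
        intro x hx
        exact hvmin x (by rw [Finset.mem_filter]; exact ⟨Finset.mem_univ _, hx⟩)
      have hinv' := inv_press G v hv hmin hinv
      have hlt := active_lt G v hv
      obtain ⟨P, hP⟩ := ih (press G v) (by omega) hinv'
      exact ⟨v :: P, ⟨hv, hP.1⟩, hP.2⟩
    · push_neg at hb
      have hb' : ∀ v : V, G.black v = false := by
        intro v
        cases h' : G.black v with
        | false => rfl
        | true => exact absurd h' (hb v)
      exact ⟨[], trivial, allwhite_of_noblack G hinv hb'⟩

end FT

end Aux

/-- If every connected component of `G` contains a black vertex, then there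
exists a successful pressing path. -/
theorem stmt1 {V : Type} [DecidableEq V] [Fintype V] (G : BW V)
    (h : ∀ u : V, ∃ w : V, (BW.toSimple G).Reachable u w ∧ G.black w = true) :
    ∃ P : List V, Successful G P := by
  have hinv : Inv0 G := by
    intro u w _
    obtain ⟨x, hr, hb⟩ := h u
    exact ⟨x, (by have h2 := (SimpleGraph.reachable_iff_reflTransGen u x).mp hr; clear hr hb; induction h2 with | refl => exact Relation.ReflTransGen.refl | tail _ hbc ih => exact ih.tail hbc), hb⟩
  exact main_aux (activeS G).card G le_rfl hinv
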